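/- arXiv:1503.03863 — 3 statements merged into one kernel-verified Lean document; each statement's English description precedes it below -/
import Mathlib

section
/- Let Ψ(t) be a differentiable family of n×n matrices. Then d/dt exp(Ψ(t)) = ∫_0^1 exp((1-α)Ψ(t)) · (dΨ/dt)(t) · exp(αΨ(t)) dα. -/
open Matrix MeasureTheory NormedSpace intervalIntegral

attribute [local instance] Matrix.linftyOpNormedRing Matrix.linftyOpNormedAlgebra

lemma wilcox_exp_sub_exp {n : ℕ} (A B : Matrix (Fin n) (Fin n) ℝ) :
    exp A - exp B = ∫ α in (0:ℝ)..1, exp ((1 - α) • A) * (A - B) * exp (α • B) := by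
  have hf : ∀ α : ℝ, HasDerivAt (fun α : ℝ => exp ((1 - α) • A) * exp (α • B))
      (exp ((1 - α) • A) * (B - A) * exp (α • B)) α := by
    intro α
    have d1 : HasDerivAt (fun α : ℝ => exp ((1 - α) • A))
        ((-1 : ℝ) • (exp ((1 - α) • A) * A)) α := by
      exact (hasDerivAt_exp_smul_const A (1 - α)).scomp α
        (((hasDerivAt_id α).const_sub 1).congr_deriv (by norm_num)) |>.congr_deriv rfl
    have d2 : HasDerivAt (fun α : ℝ => exp (α • B)) (exp (α • B) * B) α := by
      exact hasDerivAt_exp_smul_const B α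
    have := d1.mul d2
    refine this.congr_deriv ?_
    have hc : exp (α • B) * B = B * exp (α • B) :=
      ((Commute.refl B).smul_left α).exp_left
    rw [hc]
    simp only [neg_smul, one_smul, neg_mul, mul_assoc]
    noncomm_ring
  have c1 : Continuous fun α : ℝ => exp ((1 - α) • A) :=
    exp_continuous.comp ((continuous_const.sub continuous_id).smul continuous_const)
  have c2 : Continuous fun α : ℝ => exp (α • B) :=
    exp_continuous.comp (continuous_id.smul continuous_const)
  have hint := ((c1.mul (continuous_const (y := B - A))).mul c2).intervalIntegrable (μ := volume) 0 1
  have h := integral_eq_sub_of_hasDerivAt (fun α _ => hf α) hint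
  norm_num [exp_zero] at h
  have hneg : (∫ α in (0:ℝ)..1, exp ((1 - α) • A) * (A - B) * exp (α • B))
      = -∫ α in (0:ℝ)..1, exp ((1 - α) • A) * (B - A) * exp (α • B) := by
    rw [← intervalIntegral.integral_neg]
    congr 1; funext α; noncomm_ring
  rw [hneg, h]
  abel

/-- Wilcox formula for the derivative of the matrix exponential. -/
theorem wilcox_formula {n : ℕ} (Ψ Ψ' : ℝ → Matrix (Fin n) (Fin n) ℝ)
    (hcont : Continuous Ψ') (hderiv : ∀ t, HasDerivAt Ψ (Ψ' t) t) (t : ℝ) :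
    HasDerivAt (fun s => exp (Ψ s))
      (∫ α in (0:ℝ)..1, exp ((1 - α) • Ψ t) * Ψ' t * exp (α • Ψ t)) t := by
  have hΨc : Continuous Ψ := continuous_iff_continuousAt.2 fun s => (hderiv s).continuousAt
  refine hasDerivAt_iff_tendsto_slope.mpr ?_
  have hslope_eq : ∀ s : ℝ, slope (fun s => exp (Ψ s)) t s
      = ∫ α in (0:ℝ)..1, exp ((1 - α) • Ψ s) * slope Ψ t s * exp (α • Ψ t) := by
    intro s
    rw [slope_def_module, wilcox_exp_sub_exp (Ψ s) (Ψ t), ← intervalIntegral.integral_smul]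
    congr 1; funext α
    rw [slope_def_module, mul_smul_comm, smul_mul_assoc]
  have hQ : Filter.Tendsto (slope Ψ t) (nhdsWithin t {t}ᶜ) (nhds (Ψ' t)) :=
    hasDerivAt_iff_tendsto_slope.mp (hderiv t)
  rw [funext hslope_eq]
  -- bounds via compactness
  obtain ⟨C1, hC1⟩ : ∃ C1, ∀ p ∈ (Set.Icc (t - 1) (t + 1) ×ˢ Set.Icc (0:ℝ) 1),
      ‖exp ((1 - p.2) • Ψ p.1)‖ ≤ C1 := by
    apply IsCompact.exists_bound_of_continuousOn (isCompact_Icc.prod isCompact_Icc)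
    exact (exp_continuous.comp
      ((continuous_const.sub continuous_snd).smul (hΨc.comp continuous_fst))).continuousOn
  obtain ⟨C2, hC2⟩ : ∃ C2, ∀ α ∈ Set.Icc (0:ℝ) 1, ‖exp (α • Ψ t)‖ ≤ C2 := by
    apply IsCompact.exists_bound_of_continuousOn isCompact_Icc
    exact (exp_continuous.comp (continuous_id.smul continuous_const)).continuousOn
  have hC1' : (0:ℝ) ≤ C1 :=
    (norm_nonneg _).trans (hC1 (t, 0) ⟨⟨by linarith, by linarith⟩, ⟨le_rfl, zero_le_one⟩⟩)
  apply intervalIntegral.tendsto_integral_filter_of_dominated_convergence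
    (bound := fun _ => C1 * (‖Ψ' t‖ + 1) * C2)
  · refine Filter.Eventually.of_forall fun s => Continuous.aestronglyMeasurable ?_
    exact ((exp_continuous.comp
        ((continuous_const.sub continuous_id).smul continuous_const)).mul
        continuous_const).mul
      (exp_continuous.comp (continuous_id.smul continuous_const))
  · have h1 : ∀ᶠ s in nhdsWithin t {t}ᶜ, s ∈ Set.Icc (t - 1) (t + 1) :=
      Filter.Eventually.filter_mono nhdsWithin_le_nhds
        (Icc_mem_nhds (by linarith) (by linarith))
    have h2 : ∀ᶠ s in nhdsWithin t {t}ᶜ, ‖slope Ψ t s‖ ≤ ‖Ψ' t‖ + 1 :=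
      hQ.norm.eventually_le_const (lt_add_one _)
    filter_upwards [h1, h2] with s hs hsQ
    refine Filter.Eventually.of_forall fun α hα => ?_
    have hα' : α ∈ Set.Icc (0:ℝ) 1 := by
      rw [Set.uIoc_of_le zero_le_one] at hα
      exact ⟨hα.1.le, hα.2⟩
    calc ‖exp ((1 - α) • Ψ s) * slope Ψ t s * exp (α • Ψ t)‖
        ≤ ‖exp ((1 - α) • Ψ s) * slope Ψ t s‖ * ‖exp (α • Ψ t)‖ := norm_mul_le _ _
      _ ≤ (‖exp ((1 - α) • Ψ s)‖ * ‖slope Ψ t s‖) * ‖exp (α • Ψ t)‖ := by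
          gcongr; exact norm_mul_le _ _
      _ ≤ (C1 * (‖Ψ' t‖ + 1)) * C2 := by
          have hb2 : ‖exp (α • Ψ t)‖ ≤ C2 := hC2 α hα'
          have hb1 : ‖exp ((1 - α) • Ψ s)‖ ≤ C1 := hC1 (s, α) ⟨hs, hα'⟩
          have h0 : (0:ℝ) ≤ ‖Ψ' t‖ + 1 := by positivity
          exact mul_le_mul (mul_le_mul hb1 hsQ (norm_nonneg _) hC1')
            hb2 (norm_nonneg _) (mul_nonneg hC1' h0)
  · exact intervalIntegrable_const
  · refine Filter.Eventually.of_forall fun α _ => ?_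
    have hE1 : Filter.Tendsto (fun s => exp ((1 - α) • Ψ s)) (nhdsWithin t {t}ᶜ)
        (nhds (exp ((1 - α) • Ψ t))) :=
      ((exp_continuous.comp (hΨc.const_smul (1 - α))).tendsto t).mono_left nhdsWithin_le_nhds
    exact (hE1.mul hQ).mul tendsto_const_nhds
end

section
/- Let Ψ be a real symmetric n×n matrix with spectral decomposition Ψ = Σ_i λ_i P_i (P_i = e_i e_i^T for an orthonormal eigenbasis), and let ε be any real symmetric n×n matrix. Define F(Ψ, ε) = Σ_{i,j} f(λ_i - λ_j) P_i ε P_j with f(x) = x/tanh(x/2) (f(0) = 2). Then ∫_0^1 exp((1-α)Ψ) F(Ψ, ε) exp(αΨ) dα = ε·exp(Ψ) + exp(Ψ)·ε. -/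
open Matrix MeasureTheory NormedSpace

attribute [local instance] Matrix.linftyOpNormedRing Matrix.linftyOpNormedAlgebra

lemma scalar_int_central (f : ℝ → ℝ) (hf0 : f 0 = 2)
    (hf : ∀ x : ℝ, x ≠ 0 → f x = x / Real.tanh (x / 2)) (a b : ℝ) :
    (∫ α in (0:ℝ)..1, Real.exp ((1 - α) * a) * Real.exp (α * b)) * f (a - b)
      = Real.exp a + Real.exp b := by
  by_cases hab : a = b
  · subst hab
    have h1 : ∀ α ∈ Set.uIcc (0:ℝ) 1, Real.exp ((1 - α) * a) * Real.exp (α * a) = Real.exp a := by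
      intro α _; rw [← Real.exp_add]; congr 1; ring
    rw [intervalIntegral.integral_congr h1]
    simp [sub_self, hf0]
    ring
  · have hd0 : b - a ≠ 0 := sub_ne_zero.mpr (Ne.symm hab)
    set d := b - a with hdd
    have h1 : ∀ α ∈ Set.uIcc (0:ℝ) 1,
        Real.exp ((1 - α) * a) * Real.exp (α * b) = Real.exp a * Real.exp (d * α) := by
      intro α _; rw [← Real.exp_add, ← Real.exp_add]; congr 1; rw [hdd]; ring
    rw [intervalIntegral.integral_congr h1, intervalIntegral.integral_const_mul]
    have h2 : (∫ α in (0:ℝ)..1, Real.exp (d * α)) = (Real.exp d - 1) / d := by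
      rw [intervalIntegral.integral_comp_mul_left (fun x => Real.exp x) hd0]
      simp [integral_exp, smul_eq_mul]
      ring
    rw [h2, hf _ (sub_ne_zero.mpr hab)]
    have hab2 : a - b = -d := by rw [hdd]; ring
    set u := Real.exp (d/2) with hu
    have hu0 : u ≠ 0 := (Real.exp_pos _).ne'
    have hud : Real.exp d = u * u := by rw [hu, ← Real.exp_add]; ring_nf
    have hexd : Real.exp d ≠ 1 := fun h => hd0 ((Real.exp_eq_one_iff d).mp h)
    have h1u : 1 - u * u ≠ 0 := fun h => hexd (by rw [hud]; linarith)
    have h2u : 1 + u * u ≠ 0 := by positivity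
    have hb : Real.exp b = Real.exp a * (u * u) := by
      rw [← hud, ← Real.exp_add]; congr 1; rw [hdd]; ring
    have htanh : Real.tanh ((a-b)/2) = (1 - u * u) / (1 + u * u) := by
      rw [Real.tanh_eq_sinh_div_cosh, Real.sinh_eq, Real.cosh_eq, hab2,
        show -d/2 = -(d/2) by ring, Real.exp_neg, neg_neg, ← hu]
      rw [div_div_div_cancel_right₀]
      · field_simp
      · norm_num
    rw [htanh, hab2, hb, hud]
    field_simp
    have h1u' : (1 - u ^ 2) * (1 - u ^ 2)⁻¹ = 1 := mul_inv_cancel₀ (by rwa [sq])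
    linear_combination h1u'


lemma integral_double_step {E : Type*} [NormedAddCommGroup E] [NormedSpace ℝ E]
    [CompleteSpace E] {n : ℕ} (g : Fin n → Fin n → ℝ → ℝ) (hg : ∀ i j, Continuous (g i j))
    (Q : Fin n → Fin n → E) (F : ℝ → E)
    (hF : ∀ α ∈ Set.uIcc (0:ℝ) 1, F α = ∑ i, ∑ j, g i j α • Q i j) :
    (∫ α in (0:ℝ)..1, F α) = ∑ i, ∑ j, (∫ α in (0:ℝ)..1, g i j α) • Q i j := by
  have hcont : ∀ i j : Fin n, IntervalIntegrable (fun α => g i j α • Q i j)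
      MeasureTheory.volume 0 1 := fun i j =>
    ((hg i j).smul continuous_const).intervalIntegrable _ _
  have hcont2 : ∀ i : Fin n, IntervalIntegrable (fun α => ∑ j, g i j α • Q i j)
      MeasureTheory.volume 0 1 := fun i =>
    (continuous_finset_sum _ fun j _ => (hg i j).smul continuous_const).intervalIntegrable _ _
  calc (∫ α in (0:ℝ)..1, F α)
      = ∫ α in (0:ℝ)..1, ∑ i, ∑ j, g i j α • Q i j := intervalIntegral.integral_congr hF
    _ = ∑ i, ∫ α in (0:ℝ)..1, ∑ j, g i j α • Q i j :=
        intervalIntegral.integral_finset_sum (fun i _ => hcont2 i)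
    _ = ∑ i, ∑ j, ∫ α in (0:ℝ)..1, g i j α • Q i j :=
        Finset.sum_congr rfl fun i _ =>
          intervalIntegral.integral_finset_sum (fun j _ => hcont i j)
    _ = ∑ i, ∑ j, (∫ α in (0:ℝ)..1, g i j α) • Q i j :=
        Finset.sum_congr rfl fun i _ => Finset.sum_congr rfl fun j _ =>
          intervalIntegral.integral_smul_const _ _

set_option maxHeartbeats 2000000 in
/-- Central identity of the log-conformation formulation (eigenvalue form). -/
theorem central_identity {n : ℕ} (Ψ ε : Matrix (Fin n) (Fin n) ℝ) (hε : ε.IsSymm)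
    (e : Fin n → (Fin n → ℝ)) (lam : Fin n → ℝ)
    (horth : ∀ i j, e i ⬝ᵥ e j = if i = j then (1:ℝ) else 0)
    (hspec : Ψ = ∑ i, lam i • Matrix.vecMulVec (e i) (e i))
    (f : ℝ → ℝ) (hf0 : f 0 = 2) (hf : ∀ x : ℝ, x ≠ 0 → f x = x / Real.tanh (x / 2)) :
    ∫ α in (0:ℝ)..1,
        exp ((1 - α) • Ψ) *
          (∑ i, ∑ j, f (lam i - lam j) •
            (Matrix.vecMulVec (e i) (e i) * ε * Matrix.vecMulVec (e j) (e j))) *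
          exp (α • Ψ)
      = ε * exp Ψ + exp Ψ * ε := by
  classical
  set P : Fin n → Matrix (Fin n) (Fin n) ℝ := fun i => vecMulVec (e i) (e i) with hP
  set E : Matrix (Fin n) (Fin n) ℝ := Matrix.of e with hE
  have hEEt : E * Eᵀ = 1 := by
    ext a b
    have := horth a b
    simp only [dotProduct] at this
    simp [Matrix.mul_apply, Matrix.one_apply, hE, this]
  have hEtE : Eᵀ * E = 1 := mul_eq_one_comm.mp hEEt
  have hdiag : ∀ d : Fin n → ℝ, Eᵀ * Matrix.diagonal d * E = ∑ i, d i • P i := by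
    intro d
    ext a b
    simp only [Matrix.mul_apply, Matrix.sum_apply, Matrix.smul_apply, hP, vecMulVec_apply,
      transpose_apply, hE, Matrix.of_apply, smul_eq_mul, Matrix.diagonal_apply, mul_ite, mul_zero,
      ite_mul, zero_mul, Finset.sum_ite_eq, Finset.sum_ite_eq', Finset.mem_univ, if_true]
    exact Finset.sum_congr rfl fun k _ => by ring
  have hPsum : ∑ i, P i = 1 := by
    have h := hdiag fun _ => (1:ℝ)
    simp only [Matrix.diagonal_one, mul_one, one_smul] at h
    rw [← h, hEtE]
  have hexpc : ∀ c : ℝ, exp (c • Ψ) = ∑ i, Real.exp (c * lam i) • P i := by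
    intro c
    have hcΨ : c • Ψ = Eᵀ * Matrix.diagonal (fun i => c * lam i) * E := by
      rw [hdiag, hspec, Finset.smul_sum]
      exact Finset.sum_congr rfl fun i _ => by rw [smul_smul]
    let U : (Matrix (Fin n) (Fin n) ℝ)ˣ := ⟨Eᵀ, E, hEtE, hEEt⟩
    have hU : (U : Matrix (Fin n) (Fin n) ℝ) = Eᵀ := rfl
    have hUinv : ((U⁻¹ : (Matrix (Fin n) (Fin n) ℝ)ˣ) : Matrix (Fin n) (Fin n) ℝ) = E := rfl
    rw [hcΨ, ← hU, ← hUinv, Matrix.exp_units_conj U, Matrix.exp_diagonal, hU, hUinv]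
    rw [Pi.exp_def]
    simp only [← Real.exp_eq_exp_ℝ]
    exact hdiag _
  have hexp1 : exp Ψ = ∑ i, Real.exp (lam i) • P i := by
    have h := hexpc 1
    simpa using h
  have hPmulP : ∀ i j, P i * P j = if i = j then P i else 0 := by
    intro i j
    have : P i * P j = (e i ⬝ᵥ e j) • P i ∨ True := Or.inr trivial
    ext a b
    simp only [hP, Matrix.mul_apply, vecMulVec_apply]
    have hc : ∑ k, e i a * e i k * (e j k * e j b)
        = (e i a * e j b) * (e i ⬝ᵥ e j) := by
      simp only [dotProduct, Finset.mul_sum]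
      exact Finset.sum_congr rfl fun k _ => by ring
    rw [hc, horth i j]
    by_cases hij : i = j <;> simp [hij, vecMulVec_apply]
  have hmulP : ∀ (a : Fin n → ℝ) (i : Fin n), (∑ k, a k • P k) * P i = a i • P i := by
    intro a i
    rw [Finset.sum_mul]
    simp [smul_mul_assoc, hPmulP, Finset.sum_ite_eq, smul_ite]
  have hPmul : ∀ (b : Fin n → ℝ) (j : Fin n), P j * (∑ l, b l • P l) = b j • P j := by
    intro b j
    rw [Finset.mul_sum]
    simp [mul_smul_comm, hPmulP, Finset.sum_ite_eq', smul_ite]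
  set Q : Fin n → Fin n → Matrix (Fin n) (Fin n) ℝ := fun i j => P i * ε * P j with hQ
  have hand : ∀ α : ℝ, exp ((1 - α) • Ψ) *
      (∑ i, ∑ j, f (lam i - lam j) • (P i * ε * P j)) * exp (α • Ψ)
      = ∑ i, ∑ j, (Real.exp ((1 - α) * lam i) * Real.exp (α * lam j) * f (lam i - lam j)) • Q i j := by
    intro α
    rw [hexpc, hexpc]
    set A := ∑ k, Real.exp ((1 - α) * lam k) • P k with hA
    set B := ∑ l, Real.exp (α * lam l) • P l with hB
    have term : ∀ i j, A * (P i * ε * P j) * B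
        = (Real.exp ((1 - α) * lam i) * Real.exp (α * lam j)) • Q i j := by
      intro i j
      have assoc : A * (P i * ε * P j) * B = (A * P i) * ε * (P j * B) := by
        noncomm_ring
      rw [assoc, hmulP, hPmul]
      rw [smul_mul_assoc, smul_mul_assoc, mul_smul_comm, smul_smul, hQ]
    simp only [Finset.mul_sum, Finset.sum_mul, smul_mul_assoc, mul_smul_comm]
    refine Finset.sum_congr rfl fun i _ => Finset.sum_congr rfl fun j _ => ?_
    rw [term i j, smul_smul,
      show f (lam i - lam j) * (Real.exp ((1 - α) * lam i) * Real.exp (α * lam j))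
        = Real.exp ((1 - α) * lam i) * Real.exp (α * lam j) * f (lam i - lam j) by ring]
  calc (∫ α in (0:ℝ)..1, exp ((1 - α) • Ψ) *
          (∑ i, ∑ j, f (lam i - lam j) • (P i * ε * P j)) * exp (α • Ψ))
      = ∫ α in (0:ℝ)..1, ∑ i, ∑ j,
          (Real.exp ((1 - α) * lam i) * Real.exp (α * lam j) * f (lam i - lam j)) • Q i j :=
        intervalIntegral.integral_congr fun α _ => hand α
    _ = ∑ i, ∑ j, (∫ α in (0:ℝ)..1,
          Real.exp ((1 - α) * lam i) * Real.exp (α * lam j) * f (lam i - lam j)) • Q i j :=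
        integral_double_step
          (fun i j α => Real.exp ((1 - α) * lam i) * Real.exp (α * lam j) * f (lam i - lam j))
          (fun i j => by fun_prop) Q _ (fun α _ => rfl)
    _ = ∑ i, ∑ j, (Real.exp (lam i) + Real.exp (lam j)) • Q i j := by
        refine Finset.sum_congr rfl fun i _ => Finset.sum_congr rfl fun j _ => ?_
        congr 1
        rw [intervalIntegral.integral_mul_const]
        exact scalar_int_central f hf0 hf (lam i) (lam j)
    _ = ε * exp Ψ + exp Ψ * ε := by
        have split : ∀ i j, (Real.exp (lam i) + Real.exp (lam j)) • Q i j
            = Real.exp (lam i) • Q i j + Real.exp (lam j) • Q i j := fun i j => add_smul _ _ _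
        simp only [split, Finset.sum_add_distrib]
        have hA1 : ∑ i, ∑ j, Real.exp (lam i) • Q i j = exp Ψ * ε := by
          have inner : ∀ i : Fin n, ∑ j, Real.exp (lam i) • Q i j
              = Real.exp (lam i) • (P i * ε) := by
            intro i
            rw [hQ]
            simp only
            rw [← Finset.smul_sum, ← Finset.mul_sum, hPsum, mul_one]
          simp only [inner]
          rw [hexp1, Finset.sum_mul]
          exact Finset.sum_congr rfl fun i _ => (smul_mul_assoc _ _ _).symm
        have hA2 : ∑ i, ∑ j, Real.exp (lam j) • Q i j = ε * exp Ψ := by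
          have inner : ∀ i : Fin n, ∑ j, Real.exp (lam j) • Q i j
              = P i * (ε * exp Ψ) := by
            intro i
            rw [hQ]
            simp only
            rw [hexp1, Finset.mul_sum, Finset.mul_sum]
            refine Finset.sum_congr rfl fun j _ => ?_
            rw [mul_smul_comm, mul_smul_comm, mul_assoc]
          simp only [inner]
          rw [← Finset.sum_mul, hPsum, one_mul]
        rw [hA1, hA2, add_comm]
end

section
/- For pairwise distinct real numbers λ_i, λ_j, λ_k, setting x = (λ_i - λ_j)/3, y = (λ_i - λ_k)/3, z = (λ_j - λ_k)/3 (so that z = y - x), the second divided difference e^{λ_i}/((λ_i-λ_j)(λ_i-λ_k)) + e^{λ_j}/((λ_j-λ_i)(λ_j-λ_k)) + e^{λ_k}/((λ_k-λ_i)(λ_k-λ_j)) equals (1/9) e^{λ_i/3} e^{λ_j/3} e^{λ_k/3} · [ g(x)g(y) + g(-x)g(z) + g(-y)g(-z) + (g(-x) - g(-y))/(y - x) + (g(x) - g(-z))/(x + z) + (g(y) - g(z))/(y - z) ], where g(t) = (e^t - 1)/t. -/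
set_option maxHeartbeats 4000000


theorem second_divided_difference_identity (li lj lk : ℝ)
    (hij : li ≠ lj) (hik : li ≠ lk) (hjk : lj ≠ lk)
    (g : ℝ → ℝ) (hg : ∀ t : ℝ, t ≠ 0 → g t = (Real.exp t - 1) / t)
    (x y z : ℝ) (hx : x = (li - lj) / 3) (hy : y = (li - lk) / 3) (hz : z = (lj - lk) / 3) :
    Real.exp li / ((li - lj) * (li - lk)) + Real.exp lj / ((lj - li) * (lj - lk))
        + Real.exp lk / ((lk - li) * (lk - lj))
      = 1 / 9 * Real.exp (li / 3) * Real.exp (lj / 3) * Real.exp (lk / 3) *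
        (g x * g y + g (-x) * g z + g (-y) * g (-z)
          + (g (-x) - g (-y)) / (y - x) + (g x - g (-z)) / (x + z)
          + (g y - g z) / (y - z)) := by
  have hxne : x ≠ 0 := by rw [hx]; intro h; apply hij; linarith [sub_eq_zero.mp (by linarith : li - lj = 0)]
  have hyne : y ≠ 0 := by rw [hy]; intro h; apply hik; linarith
  have hzne : z ≠ 0 := by rw [hz]; intro h; apply hjk; linarith
  have hnx : -x ≠ 0 := neg_ne_zero.mpr hxne
  have hny : -y ≠ 0 := neg_ne_zero.mpr hyne
  have hnz : -z ≠ 0 := neg_ne_zero.mpr hzne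
  rw [hg x hxne, hg y hyne, hg z hzne, hg _ hnx, hg _ hny, hg _ hnz]
  set a := Real.exp (li / 3) with ha
  set b := Real.exp (lj / 3) with hb
  set c := Real.exp (lk / 3) with hc
  have hane : a ≠ 0 := Real.exp_ne_zero _
  have hbne : b ≠ 0 := Real.exp_ne_zero _
  have hcne : c ≠ 0 := Real.exp_ne_zero _
  have hea : Real.exp li = a * a * a := by
    rw [ha, ← Real.exp_add, ← Real.exp_add]; congr 1; ring
  have heb : Real.exp lj = b * b * b := by
    rw [hb, ← Real.exp_add, ← Real.exp_add]; congr 1; ring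
  have hec : Real.exp lk = c * c * c := by
    rw [hc, ← Real.exp_add, ← Real.exp_add]; congr 1; ring
  have hex : Real.exp x = a / b := by
    rw [hx, ha, hb, ← Real.exp_sub]; ring_nf
  have hey : Real.exp y = a / c := by
    rw [hy, ha, hc, ← Real.exp_sub]; ring_nf
  have hez : Real.exp z = b / c := by
    rw [hz, hb, hc, ← Real.exp_sub]; ring_nf
  have henx : Real.exp (-x) = b / a := by
    rw [Real.exp_neg, hex]; field_simp
  have heny : Real.exp (-y) = c / a := by
    rw [Real.exp_neg, hey]; field_simp
  have henz : Real.exp (-z) = c / b := by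
    rw [Real.exp_neg, hez]; field_simp
  have hzyx : z = y - x := by rw [hx, hy, hz]; ring
  have hlij : li - lj = 3 * x := by rw [hx]; ring
  have hlik : li - lk = 3 * y := by rw [hy]; ring
  have hljk : lj - lk = 3 * z := by rw [hz]; ring
  have hlji : lj - li = -(3 * x) := by rw [hx]; ring
  have hlki : lk - li = -(3 * y) := by rw [hy]; ring
  have hlkj : lk - lj = -(3 * z) := by rw [hz]; ring
  rw [hea, heb, hec, hex, hey, hez, henx, heny, henz, hlij, hlik, hljk, hlji, hlki, hlkj]
  subst hzyx
  have hyx : y - x ≠ 0 := hzne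
  have hxy : x - y ≠ 0 := fun h => hyx (by linarith)
  rw [show x + (y - x) = y by ring, show y - (y - x) = x by ring]
  field_simp
  ring
end
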